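/- Let Γ be the submonoid of the multiplicative monoid of positive integers generated by {4, 6, 9}, and D the submonoid generated by {2, 3}. The map α: Γ → ℕ₊ determined by α(4)=20, α(6)=30, α(9)=45 is a well-defined injective monoid homomorphism, but there is no injective monoid homomorphism β: D → ℕ₊ with β(4)=20, β(6)=30, β(9)=45 (i.e., extending α along the inclusion Γ ⊆ D). -/

import Mathlib

private def wgt (n : ℕ+) : ℕ := (n:ℕ).factorization 2 + (n:ℕ).factorization 3

private lemma wgt_mul (m n : ℕ+) : wgt (m*n) = wgt m + wgt n := by
  simp only [wgt, PNat.mul_coe, Nat.factorization_mul m.pos.ne' n.pos.ne',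
    Finsupp.add_apply]
  ring

private lemma w4 : wgt 4 = 2 := by
  show (4:ℕ).factorization 2 + (4:ℕ).factorization 3 = 2
  rw [show (4:ℕ) = 2^2 from rfl, Nat.Prime.factorization_pow Nat.prime_two]
  simp [Finsupp.single_apply]

private lemma w6 : wgt 6 = 2 := by
  show (6:ℕ).factorization 2 + (6:ℕ).factorization 3 = 2
  rw [show (6:ℕ) = 2*3 from rfl, Nat.factorization_mul (by norm_num) (by norm_num),
    Nat.Prime.factorization Nat.prime_two, Nat.Prime.factorization Nat.prime_three]
  simp [Finsupp.single_apply]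

private lemma w9 : wgt 9 = 2 := by
  show (9:ℕ).factorization 2 + (9:ℕ).factorization 3 = 2
  rw [show (9:ℕ) = 3^2 from rfl, Nat.Prime.factorization_pow Nat.prime_three]
  simp [Finsupp.single_apply]

private lemma even_wgt {x : ℕ+} (hx : x ∈ Submonoid.closure ({4, 6, 9} : Set ℕ+)) :
    Even (wgt x) := by
  induction hx using Submonoid.closure_induction with
  | mem y hy =>
    rcases hy with h | h | h <;> subst h
    · rw [w4]; decide
    · rw [w6]; decide
    · rw [w9]; decide
  | one => simp [wgt]
  | mul a b _ _ ha hb => rw [wgt_mul]; exact ha.add hb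

private lemma v5_zero {x : ℕ+} (hx : x ∈ Submonoid.closure ({4, 6, 9} : Set ℕ+)) :
    (x:ℕ).factorization 5 = 0 := by
  induction hx using Submonoid.closure_induction with
  | mem y hy =>
    rcases hy with h | h | h <;> subst h <;>
      exact Nat.factorization_eq_zero_of_not_dvd (by norm_num)
  | one => simp
  | mul a b _ _ ha hb =>
    rw [PNat.mul_coe, Nat.factorization_mul a.pos.ne' b.pos.ne',
      Finsupp.add_apply, ha, hb]

theorem no_extension_of_alpha_condition_doublestar :
    ∃ α : (Submonoid.closure ({4, 6, 9} : Set ℕ+)) →* ℕ+,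
      Function.Injective α ∧
      α ⟨4, Submonoid.subset_closure (by simp)⟩ = 20 ∧
      α ⟨6, Submonoid.subset_closure (by simp)⟩ = 30 ∧
      α ⟨9, Submonoid.subset_closure (by simp)⟩ = 45 ∧
      ¬ ∃ β : (Submonoid.closure ({2, 3} : Set ℕ+)) →* ℕ+,
          Function.Injective β ∧
          β ⟨4, by
              have h2 : (2 : ℕ+) ∈ Submonoid.closure ({2, 3} : Set ℕ+) :=
                Submonoid.subset_closure (by simp)
              have : (4 : ℕ+) = 2 * 2 := rfl
              exact this ▸ mul_mem h2 h2⟩ = 20 ∧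
          β ⟨6, by
              have h2 : (2 : ℕ+) ∈ Submonoid.closure ({2, 3} : Set ℕ+) :=
                Submonoid.subset_closure (by simp)
              have h3 : (3 : ℕ+) ∈ Submonoid.closure ({2, 3} : Set ℕ+) :=
                Submonoid.subset_closure (by simp)
              have : (6 : ℕ+) = 2 * 3 := rfl
              exact this ▸ mul_mem h2 h3⟩ = 30 ∧
          β ⟨9, by
              have h3 : (3 : ℕ+) ∈ Submonoid.closure ({2, 3} : Set ℕ+) :=
                Submonoid.subset_closure (by simp)
              have : (9 : ℕ+) = 3 * 3 := rfl
              exact this ▸ mul_mem h3 h3⟩ = 45 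
:= by
  refine ⟨{ toFun := fun x => (x:ℕ+) * 5 ^ (wgt x / 2)
            map_one' := by simp [wgt]
            map_mul' := ?_ }, ?_, ?_, ?_, ?_, ?_⟩
  · rintro ⟨a, ha⟩ ⟨b, hb⟩
    obtain ⟨u, hu⟩ := even_wgt ha
    obtain ⟨v, hv⟩ := even_wgt hb
    simp only [Submonoid.coe_mul, MulMemClass.mk_mul_mk, wgt_mul, hu, hv]
    have : (u + u + (v + v)) / 2 = (u+u)/2 + (v+v)/2 := by omega
    rw [this, pow_add]
    ring
  · rintro ⟨a, ha⟩ ⟨b, hb⟩ h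
    simp only [MonoidHom.coe_mk, OneHom.coe_mk] at h
    have hN : (a:ℕ) * 5 ^ (wgt a / 2) = (b:ℕ) * 5 ^ (wgt b / 2) := by
      have := congrArg PNat.val h
      push_cast at this
      exact this
    have hpa : (5:ℕ) ^ (wgt a / 2) ≠ 0 := pow_ne_zero _ (by norm_num)
    have hpb : (5:ℕ) ^ (wgt b / 2) ≠ 0 := pow_ne_zero _ (by norm_num)
    have hv : (a:ℕ).factorization 5 + (wgt a / 2) = (b:ℕ).factorization 5 + (wgt b / 2) := by
      have h5 : (5:ℕ).Prime := by norm_num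
      have := congrArg (fun n => n.factorization 5) hN
      simpa [Nat.factorization_mul a.pos.ne' hpa,
        Nat.factorization_mul b.pos.ne' hpb,
        h5.factorization_pow, Finsupp.single_apply] using this
    rw [v5_zero ha, v5_zero hb] at hv
    simp only [zero_add] at hv
    rw [hv] at hN
    exact Subtype.ext (PNat.coe_injective
      (Nat.eq_of_mul_eq_mul_right (by positivity) hN))
  · show (4:ℕ+) * 5 ^ (wgt 4 / 2) = 20
    rw [w4]; rfl
  · show (6:ℕ+) * 5 ^ (wgt 6 / 2) = 30
    rw [w6]; rfl
  · show (9:ℕ+) * 5 ^ (wgt 9 / 2) = 45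
    rw [w9]; rfl
  · rintro ⟨β, hinj, h4, h6, h9⟩
    set t : Submonoid.closure ({2, 3} : Set ℕ+) :=
      ⟨2, Submonoid.subset_closure (by simp)⟩ with ht
    have h20 : β t * β t = 20 := by
      rw [← map_mul]
      convert h4 using 2
      exact Subtype.ext rfl
    have hn : (β t : ℕ) * (β t : ℕ) = 20 := by
      have := congrArg PNat.val h20
      push_cast at this
      exact this
    have hle : (β t : ℕ) ≤ 4 := by nlinarith
    interval_cases h : ((β t : ℕ)) <;> omega
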